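/- For every t ≥ 1 and every stage vector v⃗, the t-stage rule that applies SNTV (the (ℓ_1, Plu)-rule, where Plu^{m,k}(p) = 1 if p = 1 and 0 otherwise) at every stage satisfies Solid Coalition. In particular, STV (the (m−1)-stage rule with vector (m−1, m−2, …, 1) applying SNTV at each stage) satisfies Solid Coalition. -/

import Mathlib

/-- A multi-winner voting rule: candidate pool, list of voters (given by injective
ranking functions, smaller value = more preferred), target size ↦ winning committees. -/
abbrev MWRule (α : Type) : Type := Finset α → List (α → ℕ) → ℕ → Set (Finset α)

/-- A multi-winner voting rule outputs committees of the prescribed size drawn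
from the candidate pool. -/
def IsMWRule {α : Type} (R : MWRule α) : Prop :=
  ∀ (C : Finset α) (V : List (α → ℕ)) (k : ℕ), ∀ S ∈ R C V k, S ⊆ C ∧ S.card = k

/-- Every voter of `V` has a strict (injective) preference on the candidate set `C`. -/
def StrictPrefs {α : Type} (C : Finset α) (V : List (α → ℕ)) : Prop :=
  ∀ v ∈ V, Set.InjOn v ↑C

/-- Voter `v` ranks candidate `c` first in the pool `C`. -/
def RanksFirst {α : Type} (v : α → ℕ) (C : Finset α) (c : α) : Prop :=
  c ∈ C ∧ ∀ c' ∈ C, c' ≠ c → v c < v c'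

instance {α : Type} [DecidableEq α] (v : α → ℕ) (C : Finset α) (c : α) :
    Decidable (RanksFirst v C c) :=
  inferInstanceAs (Decidable (c ∈ C ∧ ∀ c' ∈ C, c' ≠ c → v c < v c'))

/-- The number of voters in `V` ranking candidate `c` first in the pool `C`. -/
def firstCount {α : Type} [DecidableEq α] (V : List (α → ℕ)) (C : Finset α) (c : α) : ℕ :=
  V.countP fun v => decide (RanksFirst v C c)

/-- Solid Coalition: whenever at least `n/k` voters rank some candidate `c` first,
`c` belongs to every winning committee. -/
def SolidCoalition {α : Type} [DecidableEq α] (R : MWRule α) : Prop :=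
  ∀ (C : Finset α) (V : List (α → ℕ)), StrictPrefs C V → V ≠ [] →
    ∀ k : ℕ, 1 ≤ k → k < C.card →
      ∀ c : α, V.length ≤ k * firstCount V C c →
        ∀ S ∈ R C V k, c ∈ S

/-- The winning committees of a multi-stage rule, specified by a list of
(rule, target size) pairs: the winning committee of each stage is the candidate
pool for the next stage. -/
def MultiStageWinners {α : Type} :
    List (MWRule α × ℕ) → Finset α → List (α → ℕ) → Set (Finset α)
  | [], C, _ => {C}
  | (R, k) :: rest, C, V => {S | ∃ S₁ ∈ R C V k, S ∈ MultiStageWinners rest S₁ V}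

/-- The plurality (SNTV) score of a committee `S` on the pool `C`:
`Σ_{v ∈ V} Σ_{c ∈ S} Plu(p_v(c))` where `Plu(p) = 1` iff `p = 1`. -/
def pluScore {α : Type} [DecidableEq α] (C : Finset α) (V : List (α → ℕ))
    (S : Finset α) : ℕ :=
  (V.map fun v => (S.filter fun c => RanksFirst v C c).card).sum

/-- SNTV: the `(ℓ₁, Plu)`-rule, returning the size-`k` committees of maximum
plurality score. -/
def SNTV {α : Type} [DecidableEq α] : MWRule α := fun C V k =>
  {S | S ⊆ C ∧ S.card = k ∧ ∀ T ⊆ C, T.card = k → pluScore C V T ≤ pluScore C V S}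


lemma ranksFirst_unique {α : Type} (v : α → ℕ) (C : Finset α) {c c' : α}
    (h : RanksFirst v C c) (h' : RanksFirst v C c') : c = c' := by
  by_contra hne
  exact absurd (h.2 c' h'.1 (fun e => hne e.symm)) (not_lt.2 (le_of_lt (h'.2 c h.1 hne)))

lemma firstCount_mono {α : Type} [DecidableEq α] (V : List (α → ℕ)) {S C : Finset α}
    (hS : S ⊆ C) {c : α} (hc : c ∈ S) : firstCount V C c ≤ firstCount V S c := by
  apply List.countP_mono_left
  intro v _ h
  rw [decide_eq_true_eq] at *
  exact ⟨hc, fun c' hc' hne => h.2 c' (hS hc') hne⟩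

lemma card_filter_ranks {α : Type} [DecidableEq α] (v : α → ℕ) (C S : Finset α) :
    (S.filter fun c => RanksFirst v C c).card
      = ∑ d ∈ S, if decide (RanksFirst v C d) = true then 1 else 0 := by
  rw [Finset.card_filter]
  refine Finset.sum_congr rfl fun d _ => ?_
  by_cases h : RanksFirst v C d
  · rw [if_pos h, if_pos (by rwa [decide_eq_true_eq])]
  · rw [if_neg h, if_neg (by rwa [decide_eq_true_eq])]

lemma pluScore_eq {α : Type} [DecidableEq α] (C : Finset α) (V : List (α → ℕ))
    (S : Finset α) : pluScore C V S = ∑ d ∈ S, firstCount V C d := by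
  induction V with
  | nil => simp [pluScore, firstCount]
  | cons v V ih =>
    simp only [pluScore, firstCount, List.map_cons, List.sum_cons, List.countP_cons] at ih ⊢
    rw [Finset.sum_add_distrib, ← ih, card_filter_ranks v C S]
    exact add_comm _ _

lemma filter_ranks_card_le_one {α : Type} [DecidableEq α] (v : α → ℕ) (C T : Finset α) :
    (T.filter fun c => RanksFirst v C c).card ≤ 1 := by
  apply Finset.card_le_one.2
  intro a ha b hb
  rw [Finset.mem_filter] at ha hb
  exact ranksFirst_unique v C ha.2 hb.2

lemma sum_fc_le {α : Type} [DecidableEq α] (V : List (α → ℕ)) (C T : Finset α) :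
    ∑ d ∈ T, firstCount V C d ≤ V.length := by
  induction V with
  | nil => simp [firstCount]
  | cons v V ih =>
    simp only [firstCount, List.countP_cons, List.length_cons] at ih ⊢
    rw [Finset.sum_add_distrib, ← card_filter_ranks v C T]
    have := filter_ranks_card_le_one v C T
    omega

lemma mem_of_fc_pos {α : Type} [DecidableEq α] {V : List (α → ℕ)} {C : Finset α} {c : α}
    (h : 1 ≤ firstCount V C c) : c ∈ C := by
  obtain ⟨v, -, hv⟩ := List.countP_pos_iff.1 (by exact_mod_cast h : 0 < _)
  exact (of_decide_eq_true hv).1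

lemma sntv_solid {α : Type} [DecidableEq α] {C : Finset α} {V : List (α → ℕ)} {k : ℕ} {c : α}
    (hVne : V ≠ []) (hk : 1 ≤ k) (hc : V.length ≤ k * firstCount V C c)
    {S : Finset α} (hS : S ∈ SNTV C V k) : c ∈ S := by
  obtain ⟨hSC, hcard, hmax⟩ := hS
  have hn : 1 ≤ V.length := List.length_pos_iff.2 hVne
  have hfc : 1 ≤ firstCount V C c := by
    rcases Nat.eq_zero_or_pos (firstCount V C c) with h | h
    · rw [h, Nat.mul_zero] at hc; omega
    · exact h
  have hcC : c ∈ C := mem_of_fc_pos hfc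
  by_contra hcS
  have hsum : firstCount V C c + ∑ d ∈ S, firstCount V C d ≤ V.length := by
    have := sum_fc_le V C (insert c S)
    rwa [Finset.sum_insert hcS] at this
  have hex : ∃ d ∈ S, firstCount V C d < firstCount V C c := by
    by_contra h
    push_neg at h
    have h1 : k * firstCount V C c ≤ ∑ d ∈ S, firstCount V C d := by
      calc k * firstCount V C c = ∑ _d ∈ S, firstCount V C c := by
            rw [Finset.sum_const, hcard, smul_eq_mul]
        _ ≤ _ := Finset.sum_le_sum h
    omega
  obtain ⟨d, hd, hlt⟩ := hex
  have hcT : c ∉ S.erase d := fun h => hcS (Finset.mem_of_mem_erase h)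
  have hTC : insert c (S.erase d) ⊆ C :=
    Finset.insert_subset hcC ((Finset.erase_subset _ _).trans hSC)
  have hTcard : (insert c (S.erase d)).card = k := by
    rw [Finset.card_insert_of_notMem hcT, Finset.card_erase_of_mem hd]
    have : 1 ≤ S.card := Finset.card_pos.2 ⟨d, hd⟩
    omega
  have h1 : pluScore C V S = firstCount V C d + ∑ x ∈ S.erase d, firstCount V C x := by
    rw [pluScore_eq, ← Finset.add_sum_erase S _ hd]
  have h2 : pluScore C V (insert c (S.erase d))
      = firstCount V C c + ∑ x ∈ S.erase d, firstCount V C x := by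
    rw [pluScore_eq, Finset.sum_insert hcT]
  have := hmax _ hTC hTcard
  omega

lemma multistage_aux {α : Type} [DecidableEq α] :
    ∀ (ks : List ℕ) (C : Finset α) (V : List (α → ℕ)), StrictPrefs C V → V ≠ [] →
      ∀ c : α, c ∈ C → (∀ k ∈ ks, 1 ≤ k ∧ V.length ≤ k * firstCount V C c) →
      ∀ S ∈ MultiStageWinners (ks.map fun k => ((SNTV : MWRule α), k)) C V, c ∈ S
  | [], C, V, _, _, c, hcC, _, S, hS => by
      simp only [List.map_nil, MultiStageWinners, Set.mem_singleton_iff] at hS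
      subst hS; exact hcC
  | k :: rest, C, V, hV, hVne, c, hcC, h, S, hS => by
      simp only [List.map_cons, MultiStageWinners, Set.mem_setOf_eq] at hS
      obtain ⟨S₁, hS₁, hS⟩ := hS
      have hk := h k (List.mem_cons_self)
      have hc1 : c ∈ S₁ := sntv_solid hVne hk.1 hk.2 hS₁
      have hS₁C : S₁ ⊆ C := hS₁.1
      refine multistage_aux rest S₁ V (fun v hv => (hV v hv).mono (by exact_mod_cast hS₁C))
        hVne c hc1 (fun k' hk' => ?_) S hS
      obtain ⟨h1, h2⟩ := h k' (List.mem_cons_of_mem _ hk')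
      exact ⟨h1, h2.trans (Nat.mul_le_mul_left _ (firstCount_mono V hS₁C hc1))⟩

lemma getLast_le_of_pairwise :
    ∀ (l : List ℕ) (h : l ≠ []), List.Pairwise (· > ·) l → ∀ k ∈ l, l.getLast h ≤ k
  | [a], _, _, k, hk => by simp only [List.mem_singleton] at hk; simp [hk, List.getLast]
  | a :: b :: t, _, hp, k, hk => by
      rw [List.getLast_cons (by simp : b :: t ≠ [])]
      rcases List.mem_cons.1 hk with rfl | hk
      · have hab : k > b := (List.pairwise_cons.1 hp).1 b (by simp)
        have := getLast_le_of_pairwise (b :: t) (by simp) (List.pairwise_cons.1 hp).2 b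
          (by simp)
        omega
      · exact getLast_le_of_pairwise (b :: t) (by simp) (List.pairwise_cons.1 hp).2 k hk

/-- For every `t ≥ 1` (the number of stages, `t = ks.length`) and
every stage vector `ks` with `|C| > k_1 > … > k_t ≥ 1`, the `t`-stage rule
applying SNTV at every stage satisfies Solid Coalition (in particular this covers
STV, which is the `(m-1)`-stage rule with vector `(m-1, …, 1)` applying SNTV at
each stage): if at least `n / k_t` voters rank `c` first, then `c` belongs to
every winning committee. -/
theorem multistage_SNTV_solid_coalition {α : Type} [DecidableEq α]
    (ks : List ℕ) (hkne : ks ≠ [])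
    (C : Finset α) (V : List (α → ℕ)) (hV : StrictPrefs C V) (hVne : V ≠ [])
    (hchain : List.Chain (· > ·) C.card ks) (hpos : ∀ k ∈ ks, 1 ≤ k)
    (c : α) (hc : V.length ≤ ks.getLast hkne * firstCount V C c) :
    ∀ S ∈ MultiStageWinners (ks.map fun k => ((SNTV : MWRule α), k)) C V, c ∈ S := by
  have hgl : ks.getLast hkne ∈ ks := List.getLast_mem hkne
  have hpw : List.Pairwise (· > ·) (C.card :: ks) := List.isChain_iff_pairwise.1 hchain
  have hle : ∀ k ∈ ks, ks.getLast hkne ≤ k :=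
    getLast_le_of_pairwise ks hkne (List.pairwise_cons.1 hpw).2
  have hn : 1 ≤ V.length := List.length_pos_iff.2 hVne
  have hfc : 1 ≤ firstCount V C c := by
    rcases Nat.eq_zero_or_pos (firstCount V C c) with h | h
    · rw [h, Nat.mul_zero] at hc; omega
    · exact h
  exact multistage_aux ks C V hV hVne c (mem_of_fc_pos hfc)
    (fun k hk => ⟨hpos k hk, hc.trans (Nat.mul_le_mul_right _ (hle k hk))⟩)
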